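/- Let n ≥ 3 and 1 ≤ k ≤ n−1. For t > 0 define J_k(t) = t^k · ∫_{S^{n-1}} ( t^{−2n}(θ₁² + ⋯ + θ_k²) + θ_{k+1}² + ⋯ + θₙ² )^{1/2} dθ (spherical Lebesgue measure). Then J_k is not injective on (0,∞): there exist a, b > 0 with a ≠ b and J_k(a) = J_k(b). (Consequently there exist two non-congruent ellipsoids of revolution in ℝⁿ with equal volumes Vₙ and equal k-th intrinsic volumes V_k.) -/

import Mathlib

open MeasureTheory Real Set

noncomputable def sphereMeasure (n : ℕ) :
    Measure (Metric.sphere (0 : EuclideanSpace ℝ (Fin n)) 1) :=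
  (volume : Measure (EuclideanSpace ℝ (Fin n))).toSphere

/-- `J_m(t) = t^m ∫_{S^{n-1}} ( t^{-2n}(θ₁²+⋯+θ_m²) + θ_{m+1}²+⋯+θₙ² )^{1/2} dθ`;
up to a constant, the `m`-th intrinsic volume of the ellipsoid of revolution with
semiaxes `(t,…,t,t^{1-n})`. -/
noncomputable def Jfun (n m : ℕ) (t : ℝ) : ℝ :=
  t ^ m * ∫ θ : Metric.sphere (0 : EuclideanSpace ℝ (Fin n)) 1,
    Real.sqrt (∑ j : Fin n, (if (j : ℕ) < m then (t ^ (2 * n))⁻¹ else 1) *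
      ((θ : EuclideanSpace ℝ (Fin n)) j) ^ 2) ∂(sphereMeasure n)

open scoped ENNReal Pointwise

instance sphereMeasure_finite (n : ℕ) : IsFiniteMeasure (sphereMeasure n) := by
  unfold sphereMeasure; infer_instance

lemma integrable_of_continuous_sphere {n : ℕ}
    (f : Metric.sphere (0 : EuclideanSpace ℝ (Fin n)) 1 → ℝ) (hf : Continuous f) :
    Integrable f (sphereMeasure n) :=
  hf.integrable_of_hasCompactSupport (HasCompactSupport.of_compactSpace f)

lemma continuous_coord {n : ℕ} (j : Fin n) :
    Continuous (fun θ : Metric.sphere (0 : EuclideanSpace ℝ (Fin n)) 1 =>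
      (θ : EuclideanSpace ℝ (Fin n)) j) :=
  (continuous_apply j).comp ((by fun_prop : Continuous (fun x : EuclideanSpace ℝ (Fin n) => x.ofLp)).comp continuous_subtype_val)

/-- the sum of squares of coordinates of a point on the unit sphere is 1 -/
lemma sum_sq_coord {n : ℕ} (θ : Metric.sphere (0 : EuclideanSpace ℝ (Fin n)) 1) :
    ∑ j : Fin n, ((θ : EuclideanSpace ℝ (Fin n)) j) ^ 2 = 1 := by
  have h : ‖(θ : EuclideanSpace ℝ (Fin n))‖ = 1 := by simp [θ.2]
  rw [EuclideanSpace.norm_eq] at h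
  have h2 := congrArg (· ^ 2) h
  simp only [one_pow] at h2
  rw [Real.sq_sqrt (by positivity)] at h2
  simpa [sq_abs] using h2

/-- the set where a fixed coordinate vanishes has sphereMeasure zero -/
lemma sphereMeasure_coord_zero {n : ℕ} (j : Fin n) :
    sphereMeasure n {θ : Metric.sphere (0 : EuclideanSpace ℝ (Fin n)) 1 |
      (θ : EuclideanSpace ℝ (Fin n)) j = 0} = 0 := by
  set s : Set (Metric.sphere (0 : EuclideanSpace ℝ (Fin n)) 1) :=
    {θ | (θ : EuclideanSpace ℝ (Fin n)) j = 0} with hs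
  have hms : MeasurableSet s :=
    (continuous_coord j).measurable (measurableSet_singleton 0)
  rw [sphereMeasure, Measure.toSphere_apply' _ hms]
  have hK : (volume : Measure (EuclideanSpace ℝ (Fin n)))
      (LinearMap.ker (EuclideanSpace.projₗ (𝕜 := ℝ) j) : Set (EuclideanSpace ℝ (Fin n))) = 0 := by
    apply Measure.addHaar_submodule
    intro h
    have : EuclideanSpace.single j (1 : ℝ) ∈ LinearMap.ker (EuclideanSpace.projₗ (𝕜 := ℝ) j) := by
      rw [h]; trivial
    rw [LinearMap.mem_ker] at this; simp at this
  have hsub : (Ioo (0 : ℝ) 1 • (Subtype.val '' s) : Set (EuclideanSpace ℝ (Fin n))) ⊆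
      (LinearMap.ker (EuclideanSpace.projₗ (𝕜 := ℝ) j) : Set (EuclideanSpace ℝ (Fin n))) := by
    rintro x ⟨r, hr, y, ⟨θ, hθ, rfl⟩, rfl⟩
    simp only [SetLike.mem_coe, LinearMap.mem_ker]
    have h0 : (θ : EuclideanSpace ℝ (Fin n)) j = 0 := hθ
    show r • (θ : EuclideanSpace ℝ (Fin n)) j = 0
    simp [h0]
  rw [measure_mono_null hsub hK, mul_zero]

lemma sphereMeasure_univ_pos {n : ℕ} (hn : 0 < n) :
    0 < sphereMeasure n Set.univ := by
  haveI : Nonempty (Fin n) := Fin.pos_iff_nonempty.mp hn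
  haveI : Nontrivial (EuclideanSpace ℝ (Fin n)) := inferInstance
  rw [sphereMeasure, Measure.toSphere_apply_univ']
  have h1 : (volume : Measure (EuclideanSpace ℝ (Fin n))) (Metric.ball 0 1 \ {0}) =
      (volume : Measure (EuclideanSpace ℝ (Fin n))) (Metric.ball 0 1) :=
    measure_diff_null (measure_singleton _)
  rw [h1]
  have h2 : (0:ℝ≥0∞) < (volume : Measure (EuclideanSpace ℝ (Fin n))) (Metric.ball 0 1) :=
    Metric.measure_ball_pos _ _ one_pos
  have h3 : (Module.finrank ℝ (EuclideanSpace ℝ (Fin n)) : ℝ≥0∞) ≠ 0 := by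
    simp [finrank_euclideanSpace_fin, hn.ne']
  exact ENNReal.mul_pos h3 h2.ne'

/-- the integral of `|θ j|` over the sphere is positive -/
lemma integral_abs_coord_pos {n : ℕ} (hn : 0 < n) (j : Fin n) :
    0 < ∫ θ : Metric.sphere (0 : EuclideanSpace ℝ (Fin n)) 1,
      |(θ : EuclideanSpace ℝ (Fin n)) j| ∂(sphereMeasure n) := by
  have hint : Integrable (fun θ : Metric.sphere (0 : EuclideanSpace ℝ (Fin n)) 1 =>
      |(θ : EuclideanSpace ℝ (Fin n)) j|) (sphereMeasure n) :=
    integrable_of_continuous_sphere _ (continuous_coord j).abs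
  rw [integral_pos_iff_support_of_nonneg (fun θ => abs_nonneg _) hint]
  have hsupp : Function.support (fun θ : Metric.sphere (0 : EuclideanSpace ℝ (Fin n)) 1 =>
      |(θ : EuclideanSpace ℝ (Fin n)) j|) =
      {θ : Metric.sphere (0 : EuclideanSpace ℝ (Fin n)) 1 |
        (θ : EuclideanSpace ℝ (Fin n)) j = 0}ᶜ := by
    ext θ; simp [Function.mem_support]
  rw [hsupp]
  by_contra h
  push_neg at h
  have h0 : sphereMeasure n {θ : Metric.sphere (0 : EuclideanSpace ℝ (Fin n)) 1 |
      (θ : EuclideanSpace ℝ (Fin n)) j = 0}ᶜ = 0 := le_antisymm h zero_le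
  have hpos := sphereMeasure_univ_pos hn
  have hle := measure_union_le (μ := sphereMeasure n)
    {θ : Metric.sphere (0 : EuclideanSpace ℝ (Fin n)) 1 |
      (θ : EuclideanSpace ℝ (Fin n)) j = 0}
    {θ : Metric.sphere (0 : EuclideanSpace ℝ (Fin n)) 1 |
      (θ : EuclideanSpace ℝ (Fin n)) j = 0}ᶜ
  rw [Set.union_compl_self, sphereMeasure_coord_zero j, h0] at hle
  exact hpos.ne' (le_antisymm (by simpa using hle) zero_le)

/-- pointwise lower bound for the integrand -/
lemma integrand_lower_bound {n m : ℕ} {t : ℝ} (ht : 0 < t) (j : Fin n)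
    (θ : Metric.sphere (0 : EuclideanSpace ℝ (Fin n)) 1) :
    (if (j : ℕ) < m then (t ^ n)⁻¹ else 1) * |(θ : EuclideanSpace ℝ (Fin n)) j| ≤
    Real.sqrt (∑ i : Fin n, (if (i : ℕ) < m then (t ^ (2 * n))⁻¹ else 1) *
      ((θ : EuclideanSpace ℝ (Fin n)) i) ^ 2) := by
  have h1 : (if (j : ℕ) < m then (t ^ (2 * n))⁻¹ else 1) *
      ((θ : EuclideanSpace ℝ (Fin n)) j) ^ 2 ≤
      ∑ i : Fin n, (if (i : ℕ) < m then (t ^ (2 * n))⁻¹ else 1) *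
        ((θ : EuclideanSpace ℝ (Fin n)) i) ^ 2 := by
    apply Finset.single_le_sum (f := fun i : Fin n =>
      (if (i : ℕ) < m then (t ^ (2 * n))⁻¹ else 1) * ((θ : EuclideanSpace ℝ (Fin n)) i) ^ 2)
      (fun i _ => by positivity) (Finset.mem_univ j)
  calc (if (j : ℕ) < m then (t ^ n)⁻¹ else 1) * |(θ : EuclideanSpace ℝ (Fin n)) j|
      = Real.sqrt ((if (j : ℕ) < m then (t ^ (2 * n))⁻¹ else 1) *
        ((θ : EuclideanSpace ℝ (Fin n)) j) ^ 2) := by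
        rw [Real.sqrt_mul (by positivity), Real.sqrt_sq_eq_abs]
        congr 1
        split
        · rw [two_mul, pow_add, Real.sqrt_inv, Real.sqrt_mul_self (by positivity)]
        · exact Real.sqrt_one.symm
    _ ≤ _ := Real.sqrt_le_sqrt h1

lemma integrable_integrand {n m : ℕ} (t : ℝ) :
    Integrable (fun θ : Metric.sphere (0 : EuclideanSpace ℝ (Fin n)) 1 =>
      Real.sqrt (∑ j : Fin n, (if (j : ℕ) < m then (t ^ (2 * n))⁻¹ else 1) *
        ((θ : EuclideanSpace ℝ (Fin n)) j) ^ 2)) (sphereMeasure n) := by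
  apply integrable_of_continuous_sphere
  exact (continuous_finset_sum _ fun j _ =>
    (continuous_const.mul ((continuous_coord j).pow 2))).sqrt

lemma Jfun_continuousAt {n m : ℕ} {t₀ : ℝ} (ht₀ : 0 < t₀) :
    ContinuousAt (Jfun n m) t₀ := by
  unfold Jfun
  apply ContinuousAt.mul (continuousAt_pow _ _)
  set C : ℝ := Real.sqrt (max ((t₀ / 2) ^ (2 * n))⁻¹ 1) with hC
  apply continuousAt_of_dominated (bound := fun _ => C)
  · filter_upwards with t
    exact (integrable_integrand (n := n) (m := m) t).aestronglyMeasurable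
  · filter_upwards [eventually_gt_nhds (half_lt_self ht₀)] with t ht
    filter_upwards with θ
    have ht2 : (0:ℝ) < t₀ / 2 := half_pos ht₀
    have hsum : ∑ j : Fin n, (if (j : ℕ) < m then (t ^ (2 * n))⁻¹ else 1) *
        ((θ : EuclideanSpace ℝ (Fin n)) j) ^ 2 ≤
        max ((t₀ / 2) ^ (2 * n))⁻¹ 1 := by
      calc ∑ j : Fin n, (if (j : ℕ) < m then (t ^ (2 * n))⁻¹ else 1) *
          ((θ : EuclideanSpace ℝ (Fin n)) j) ^ 2
          ≤ ∑ j : Fin n, max ((t₀ / 2) ^ (2 * n))⁻¹ 1 *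
            ((θ : EuclideanSpace ℝ (Fin n)) j) ^ 2 := by
            apply Finset.sum_le_sum
            intro i _
            apply mul_le_mul_of_nonneg_right _ (sq_nonneg _)
            split
            · exact le_max_of_le_left (by
                apply inv_anti₀ (by positivity)
                exact pow_le_pow_left₀ ht2.le ht.le _)
            · exact le_max_right _ _
        _ = max ((t₀ / 2) ^ (2 * n))⁻¹ 1 := by
            rw [← Finset.mul_sum, sum_sq_coord, mul_one]
    rw [Real.norm_eq_abs, abs_of_nonneg (Real.sqrt_nonneg _)]
    exact Real.sqrt_le_sqrt hsum
  · exact integrable_const _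
  · filter_upwards with θ
    apply Real.continuous_sqrt.continuousAt.comp
    apply tendsto_finset_sum
    intro i _
    apply ContinuousAt.mul _ continuousAt_const
    split
    · exact (continuousAt_pow _ _).inv₀ (pow_ne_zero _ ht₀.ne')
    · exact continuousAt_const

lemma Jfun_lower_bound {n m : ℕ} {t : ℝ} (ht : 0 < t) (j : Fin n) :
    t ^ m * ((if (j : ℕ) < m then (t ^ n)⁻¹ else 1) *
      ∫ θ : Metric.sphere (0 : EuclideanSpace ℝ (Fin n)) 1,
        |(θ : EuclideanSpace ℝ (Fin n)) j| ∂(sphereMeasure n)) ≤ Jfun n m t := by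
  unfold Jfun
  apply mul_le_mul_of_nonneg_left _ (by positivity)
  rw [← integral_const_mul]
  apply integral_mono
  · exact (integrable_of_continuous_sphere _ (continuous_coord j).abs).const_mul _
  · exact integrable_integrand t
  · exact fun θ => integrand_lower_bound ht j θ

theorem Jfun_not_injective
    (n : ℕ) (hn : 3 ≤ n) (k : ℕ) (hk1 : 1 ≤ k) (hk2 : k ≤ n - 1) :
    ∃ a b : ℝ, 0 < a ∧ 0 < b ∧ a ≠ b ∧ Jfun n k a = Jfun n k b := by
  have hn0 : 0 < n := by omega
  have hkn : k + 1 ≤ n := by omega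
  set f : ℝ → ℝ := Jfun n k with hf
  -- the two coordinate indices
  set j₀ : Fin n := ⟨0, hn0⟩ with hj₀
  set j₁ : Fin n := ⟨n - 1, by omega⟩ with hj₁
  set c₀ : ℝ := ∫ θ : Metric.sphere (0 : EuclideanSpace ℝ (Fin n)) 1,
      |(θ : EuclideanSpace ℝ (Fin n)) j₀| ∂(sphereMeasure n) with hc₀
  set c₁ : ℝ := ∫ θ : Metric.sphere (0 : EuclideanSpace ℝ (Fin n)) 1,
      |(θ : EuclideanSpace ℝ (Fin n)) j₁| ∂(sphereMeasure n) with hc₁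
  have hc₀pos : 0 < c₀ := integral_abs_coord_pos hn0 j₀
  have hc₁pos : 0 < c₁ := integral_abs_coord_pos hn0 j₁
  -- lower bound for small t
  have hsmall : ∀ t : ℝ, 0 < t → t ≤ 1 → c₀ * t⁻¹ ≤ f t := by
    intro t ht ht1
    have hlb := Jfun_lower_bound (m := k) ht j₀
    have hj : ((j₀ : ℕ) < k) := by simp [hj₀]; omega
    rw [if_pos hj] at hlb
    refine le_trans ?_ hlb
    have hpow : t ^ n ≤ t ^ (k + 1) := pow_le_pow_of_le_one ht.le ht1 hkn
    have htn : (0:ℝ) < t ^ n := by positivity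
    have h2 : t⁻¹ ≤ t ^ k * (t ^ n)⁻¹ := by
      rw [← div_eq_mul_inv, inv_eq_one_div, div_le_div_iff₀ ht htn, one_mul, ← pow_succ]
      exact hpow
    calc c₀ * t⁻¹ ≤ c₀ * (t ^ k * (t ^ n)⁻¹) :=
          mul_le_mul_of_nonneg_left h2 hc₀pos.le
      _ = t ^ k * ((t ^ n)⁻¹ * c₀) := by ring
  -- lower bound for large t
  have hlarge : ∀ t : ℝ, 1 ≤ t → c₁ * t ≤ f t := by
    intro t ht1
    have ht : (0:ℝ) < t := lt_of_lt_of_le one_pos ht1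
    have hlb := Jfun_lower_bound (m := k) ht j₁
    have hj : ¬ ((j₁ : ℕ) < k) := by simp [hj₁]; omega
    rw [if_neg hj, one_mul] at hlb
    refine le_trans ?_ hlb
    calc c₁ * t ≤ c₁ * t ^ k :=
          mul_le_mul_of_nonneg_left (le_self_pow₀ ht1 (by omega)) hc₁pos.le
      _ = t ^ k * c₁ := by ring
  set M : ℝ := max (f 1) 0 + 1 with hM
  have hMpos : 0 < M := by positivity
  have hf1M : f 1 < M := lt_of_le_of_lt (le_max_left _ _) (lt_add_one _)
  set a₀ : ℝ := min 1 (c₀ / M) with ha₀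
  have ha₀pos : 0 < a₀ := lt_min one_pos (div_pos hc₀pos hMpos)
  have ha₀1 : a₀ ≤ 1 := min_le_left _ _
  have hfa₀ : M ≤ f a₀ := by
    refine le_trans ?_ (hsmall a₀ ha₀pos ha₀1)
    have h3 : a₀ ≤ c₀ / M := min_le_right _ _
    rw [← div_eq_mul_inv, le_div_iff₀ ha₀pos]
    calc M * a₀ ≤ M * (c₀ / M) := mul_le_mul_of_nonneg_left h3 hMpos.le
      _ = c₀ := by field_simp
  set b₀ : ℝ := max 2 (M / c₁) with hb₀
  have hb₀2 : (2:ℝ) ≤ b₀ := le_max_left _ _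
  have hb₀1 : (1:ℝ) ≤ b₀ := by linarith
  have hfb₀ : M ≤ f b₀ := by
    refine le_trans ?_ (hlarge b₀ hb₀1)
    have h3 : M / c₁ ≤ b₀ := le_max_right _ _
    calc M = c₁ * (M / c₁) := by field_simp
      _ ≤ c₁ * b₀ := mul_le_mul_of_nonneg_left h3 hc₁pos.le
  -- continuity on the two intervals
  have hcont1 : ContinuousOn f (Icc a₀ 1) := fun x hx =>
    (Jfun_continuousAt (lt_of_lt_of_le ha₀pos hx.1)).continuousWithinAt
  have hcont2 : ContinuousOn f (Icc 1 b₀) := fun x hx =>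
    (Jfun_continuousAt (lt_of_lt_of_le one_pos hx.1)).continuousWithinAt
  obtain ⟨x, hx, hfx⟩ := intermediate_value_Icc' ha₀1 hcont1 ⟨hf1M.le, hfa₀⟩
  obtain ⟨y, hy, hfy⟩ := intermediate_value_Icc hb₀1 hcont2 ⟨hf1M.le, hfb₀⟩
  refine ⟨x, y, lt_of_lt_of_le ha₀pos hx.1, lt_of_lt_of_le one_pos hy.1, ?_, by rw [hfx, hfy]⟩
  intro hxy
  have hx1 : x ≠ 1 := fun h => absurd (h ▸ hfx) hf1M.ne
  have h4 : x < 1 := lt_of_le_of_ne hx.2 hx1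
  have h5 : (1:ℝ) ≤ y := hy.1
  linarith
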